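/- For n > 2, no single query (α, β) of n-bit integers determines the (n−1) least significant bits of every n-bit x from y = ((α+x) mod 2^n) XOR ((β+x) mod 2^n); i.e., for every (α, β) there exist x ≠ x' with x ≢ x' (mod 2^(n−1)) but yielding the same y. Hence at least 2 queries are needed. -/
import Mathlib

lemma xor_two_pow_of_testBit_false (k : ℕ) : ∀ a : ℕ, a.testBit k = false →
    a ^^^ 2^k = a + 2^k := by
  induction k with
  | zero =>
    intro a h
    simp only [Nat.testBit_zero, decide_eq_false_iff_not] at h
    have hm : a % 2 = 0 := by omega
    have h1 : (a ^^^ 1) / 2 = a / 2 := by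
      rw [Nat.xor_div_two]; norm_num
    have h2 : (a ^^^ 1) % 2 = (a + 1) % 2 := Nat.xor_mod_two_eq
    have h3 := Nat.div_add_mod (a ^^^ 1) 2
    have h4 := Nat.div_add_mod a 2
    simp only [pow_zero]
    omega
  | succ k ih =>
    intro a h
    rw [Nat.testBit_succ] at h
    have hih := ih (a / 2) h
    have h1 : (a ^^^ 2^(k+1)) / 2 = a / 2 + 2^k := by
      rw [Nat.xor_div_two]
      have : 2^(k+1) / 2 = 2^k := by
        rw [pow_succ, Nat.mul_div_cancel] <;> omega
      rw [this, hih]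
    have h2 : (a ^^^ 2^(k+1)) % 2 = (a + 2^(k+1)) % 2 := Nat.xor_mod_two_eq
    have h3 := Nat.div_add_mod (a ^^^ 2^(k+1)) 2
    have h4 := Nat.div_add_mod a 2
    have h5 : 2^(k+1) = 2 * 2^k := by ring
    omega

lemma core_collision (n : ℕ) (hn : 2 < n) (d : ℕ) (hd : d < 2^n) :
    ∃ s s' : ℕ, s < 2^n ∧ s' < 2^n ∧ s % 2^(n-1) ≠ s' % 2^(n-1) ∧
      (s ^^^ ((s + d) % 2^n)) = (s' ^^^ ((s' + d) % 2^n)) := by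
  have hH4 : 4 ≤ 2^(n-1) := by
    calc (4:ℕ) = 2^2 := by norm_num
    _ ≤ 2^(n-1) := Nat.pow_le_pow_right (by norm_num) (by omega)
  have hNH : 2^n = 2 * 2^(n-1) := by
    rw [← pow_succ']
    congr 1
    omega
  by_cases h : ∃ k, k < n - 1 ∧ d.testBit k = false
  · obtain ⟨k, hk, hb⟩ := h
    refine ⟨0, 2^k, by positivity, ?_, ?_, ?_⟩
    · exact Nat.pow_lt_pow_right (by norm_num) (by omega)
    · have hkH : 2^k < 2^(n-1) := Nat.pow_lt_pow_right (by norm_num) (by omega)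
      have : (2^k) % 2^(n-1) = 2^k := Nat.mod_eq_of_lt hkH
      simp only [Nat.zero_mod, this]
      positivity
    · have hx := xor_two_pow_of_testBit_false k d hb
      have hlt : d ^^^ 2^k < 2^n := Nat.xor_lt_two_pow hd
        (Nat.pow_lt_pow_right (by norm_num) (by omega))
      have h1 : (0 + d) % 2^n = d := by
        rw [Nat.zero_add, Nat.mod_eq_of_lt hd]
      have h2 : (2^k + d) % 2^n = d ^^^ 2^k := by
        rw [Nat.add_comm, hx]
        exact Nat.mod_eq_of_lt (by rw [← hx]; exact hlt)
      rw [h1, h2, Nat.zero_xor]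
      rw [Nat.xor_comm d (2^k), ← Nat.xor_assoc, Nat.xor_self, Nat.zero_xor]
  · push_neg at h
    -- all low bits of d are 1, so d % 2^(n-1) = 2^(n-1) - 1
    have hdm : d % 2^(n-1) = 2^(n-1) - 1 := by
      apply Nat.eq_of_testBit_eq
      intro i
      rw [Nat.testBit_mod_two_pow, Nat.testBit_two_pow_sub_one]
      by_cases hi : i < n - 1
      · simp [hi, h i hi]
      · simp [hi]
    have hdd := Nat.div_add_mod d (2^(n-1))
    have hdiv : d / 2^(n-1) < 2 := by
      apply Nat.div_lt_of_lt_mul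
      omega
    have hcase : d = 2^(n-1) - 1 ∨ d = 2^n - 1 := by
      interval_cases h : d / 2^(n-1) <;> omega
    refine ⟨1, 3, by omega, by omega, ?_, ?_⟩
    · rw [Nat.mod_eq_of_lt (by omega), Nat.mod_eq_of_lt (by omega)]
      omega
    · rcases hcase with hc | hc
      · subst hc
        have e1 : (1 + (2^(n-1) - 1)) % 2^n = 2^(n-1) := by
          rw [show 1 + (2^(n-1) - 1) = 2^(n-1) by omega]
          exact Nat.mod_eq_of_lt (by omega)
        have e2 : (3 + (2^(n-1) - 1)) % 2^n = 2^(n-1) + 2 := by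
          rw [show 3 + (2^(n-1) - 1) = 2^(n-1) + 2 by omega]
          exact Nat.mod_eq_of_lt (by omega)
        have hb : (2^(n-1)).testBit 1 = false := by
          rw [Nat.testBit_two_pow]
          simp
          omega
        have hx : 2^(n-1) ^^^ 2^1 = 2^(n-1) + 2^1 := xor_two_pow_of_testBit_false 1 _ hb
        rw [e1, e2, show (2:ℕ)^1 = 2 from rfl] at *
        rw [← hx, show (3:ℕ) = 1 ^^^ 2 from rfl]
        rw [Nat.xor_assoc, Nat.xor_comm 2 (2^(n-1) ^^^ 2), Nat.xor_assoc,
          Nat.xor_self, Nat.xor_zero]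
      · subst hc
        have e1 : (1 + (2^n - 1)) % 2^n = 0 := by
          rw [show 1 + (2^n - 1) = 2^n by omega]
          exact Nat.mod_self _
        have e2 : (3 + (2^n - 1)) % 2^n = 2 := by
          rw [show 3 + (2^n - 1) = 2^n + 2 by omega, Nat.add_mod_left]
          exact Nat.mod_eq_of_lt (by omega)
        rw [e1, e2]
        decide

theorem stmt_18 (n : ℕ) (hn : 2 < n) (α β : ℕ) (hα : α < 2^n) (hβ : β < 2^n) :
    ∃ x x' : ℕ, x < 2^n ∧ x' < 2^n ∧ x % 2^(n-1) ≠ x' % 2^(n-1) ∧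
      (((α + x) % 2^n) ^^^ ((β + x) % 2^n)) =
        (((α + x') % 2^n) ^^^ ((β + x') % 2^n)) := by
  have hNpos : 0 < 2^n := by positivity
  set N := 2^n with hN
  set c := N - α with hc
  set d := (β + c) % N with hd
  obtain ⟨s, s', hs, hs', hne, heq⟩ := core_collision n hn d (Nat.mod_lt _ hNpos)
  have hHdvd : 2^(n-1) ∣ N := pow_dvd_pow 2 (by omega)
  refine ⟨(s + c) % N, (s' + c) % N, Nat.mod_lt _ hNpos, Nat.mod_lt _ hNpos, ?_, ?_⟩
  · rw [Nat.mod_mod_of_dvd _ hHdvd, Nat.mod_mod_of_dvd _ hHdvd]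
    intro hcontra
    exact hne (Nat.ModEq.add_right_cancel' c hcontra)
  · have key : ∀ t : ℕ, t < N →
        (α + (t + c) % N) % N = t ∧ (β + (t + c) % N) % N = (t + d) % N := by
      intro t ht
      constructor
      · rw [Nat.add_mod_mod, show α + (t + c) = t + N by omega,
          Nat.add_mod_right, Nat.mod_eq_of_lt ht]
      · rw [Nat.add_mod_mod, show β + (t + c) = t + (β + c) by ring,
          hd, Nat.add_mod_mod]
    obtain ⟨k1, k2⟩ := key s hs
    obtain ⟨k3, k4⟩ := key s' hs'
    rw [k1, k2, k3, k4]
    exact heq
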